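/- arXiv:1706.01904 — 5 statements merged into one kernel-verified Lean document; each statement's English description precedes it below -/
import Mathlib

section
/- Let S be a closed, densely defined symmetric operator on a complex Hilbert space H, let V be a bounded non-negative selfadjoint operator on H, and let A := (S + iV)↾_{D(S)}, i.e., D(A) = D(S) and Af = Sf + iVf. If B is a dissipative operator extending A, then D(B) ⊆ D(S*). -/
noncomputable section

open Complex

variable {H : Type*} [NormedAddCommGroup H] [InnerProductSpace ℂ H] [CompleteSpace H]

local notation "⟪" x ", " y "⟫" => @inner ℂ _ _ x y

/-- A partially defined operator is *dissipative* if `Im ⟪ψ, A ψ⟫ ≥ 0` for all `ψ` in its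
domain. -/
def Dissipative (A : H →ₗ.[ℂ] H) : Prop :=
  ∀ ψ : A.domain, 0 ≤ (⟪(ψ : H), A ψ⟫).im

/-- A partially defined operator is *symmetric* if `⟪f, S g⟫ = ⟪S f, g⟫` on its domain. -/
def IsSymmetricP (S : H →ₗ.[ℂ] H) : Prop :=
  ∀ f g : S.domain, ⟪(f : H), S g⟫ = ⟪S f, (g : H)⟫

/-- A partially defined operator is *non-negative* if `⟪f, V f⟫` is real and `≥ 0` on its
domain. -/
def NonnegP (V : H →ₗ.[ℂ] H) : Prop :=
  ∀ f : V.domain, (⟪(f : H), V f⟫).im = 0 ∧ 0 ≤ (⟪(f : H), V f⟫).re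

/-- If `S` is closed densely defined symmetric, `V` bounded non-negative
selfadjoint, and `B` is a dissipative extension of `A = S + iV` (domain `D(S)`), then
`D(B) ⊆ D(S*)`. -/
theorem statement15
    (S : H →ₗ.[ℂ] H) (V : H →L[ℂ] H)
    (hSdense : Dense (S.domain : Set H)) (hSclosed : S.IsClosed) (hSsymm : IsSymmetricP S)
    (hVsa : IsSelfAdjoint V) (hVnn : ∀ f : H, 0 ≤ (⟪f, V f⟫).re)
    (B : H →ₗ.[ℂ] H)
    (hdomB : S.domain ≤ B.domain)
    (hB : ∀ (x : S.domain) (hx : (x : H) ∈ B.domain),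
      B ⟨(x : H), hx⟩ = S x + Complex.I • V (x : H))
    (hBdiss : Dissipative B) :
    B.domain ≤ S.adjoint.domain := by
  intro g hg
  set gB : B.domain := ⟨g, hg⟩ with hgBdef
  set h : H := B gB with hhdef
  set d : ℝ := (⟪g, h⟫).im with hddef
  have hd0 : 0 ≤ d := hBdiss gB
  have hBf : ∀ f : S.domain, B ⟨(f : H), hdomB f.2⟩ = S f + Complex.I • V (f : H) :=
    fun f => hB f (hdomB f.2)
  -- the quadratic inequality from dissipativity
  have key : ∀ (f : S.domain) (c : ℂ),
      0 ≤ (Complex.normSq c) * (⟪(f : H), S f + Complex.I • V (f : H)⟫).im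
        + ((starRingEnd ℂ c) * ⟪(f : H), h⟫
            + c * ⟪g, S f + Complex.I • V (f : H)⟫).im + d := by
    intro f c
    have hmem : (c • (f : H) + g) ∈ B.domain :=
      B.domain.add_mem (B.domain.smul_mem c (hdomB f.2)) hg
    have hdiss := hBdiss ⟨c • (f : H) + g, hmem⟩
    have hψ : (⟨c • (f : H) + g, hmem⟩ : B.domain)
        = c • (⟨(f : H), hdomB f.2⟩ : B.domain) + gB := by
      ext
      simp [hgBdef]
    rw [hψ, B.map_add, B.map_smul, hBf] at hdiss
    have expand : ⟪((c • (⟨(f : H), hdomB f.2⟩ : B.domain) + gB : B.domain) : H),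
          c • (S f + Complex.I • V (f : H)) + h⟫
        = ((Complex.normSq c : ℝ) : ℂ) * ⟪(f : H), S f + Complex.I • V (f : H)⟫
          + ((starRingEnd ℂ c) * ⟪(f : H), h⟫ + c * ⟪g, S f + Complex.I • V (f : H)⟫)
          + ⟪g, h⟫ := by
      push_cast
      simp only [inner_add_left, inner_add_right, inner_smul_left, inner_smul_right,
        Complex.normSq_eq_conj_mul_self]
      ring
    rw [expand] at hdiss
    simpa [Complex.add_im, Complex.im_ofReal_mul] using hdiss
  -- the value of the quadratic coefficient
  have aval : ∀ f : S.domain,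
      (⟪(f : H), S f + Complex.I • V (f : H)⟫).im = (⟪(f : H), V (f : H)⟫).re := by
    intro f
    have h1 : (⟪(f : H), S f⟫).im = 0 := by
      have h2 : ⟪(f : H), S f⟫ = starRingEnd ℂ ⟪(f : H), S f⟫ :=
        (hSsymm f f).trans (inner_conj_symm _ _).symm
      have := congrArg Complex.im h2
      simp only [Complex.conj_im] at this
      linarith
    rw [inner_add_right, inner_smul_right]
    simp [Complex.add_im, Complex.mul_im, h1]
  have ha0 : ∀ f : S.domain, 0 ≤ (⟪(f : H), S f + Complex.I • V (f : H)⟫).im := by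
    intro f; rw [aval]; exact hVnn _
  have habd : ∀ f : S.domain,
      (⟪(f : H), S f + Complex.I • V (f : H)⟫).im ≤ ‖V‖ * ‖(f : H)‖ ^ 2 := by
    intro f
    rw [aval]
    calc (⟪(f : H), V (f : H)⟫).re ≤ ‖⟪(f : H), V (f : H)⟫‖ := by
          exact Complex.re_le_norm _
      _ ≤ ‖(f : H)‖ * ‖V (f : H)‖ := norm_inner_le_norm _ _
      _ ≤ ‖(f : H)‖ * (‖V‖ * ‖(f : H)‖) :=
          mul_le_mul_of_nonneg_left (V.le_opNorm _) (norm_nonneg _)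
      _ = ‖V‖ * ‖(f : H)‖ ^ 2 := by ring
  set K : ℝ := 2 * Real.sqrt (‖V‖ * d) with hKdef
  have hK0 : 0 ≤ K := by positivity
  -- discriminant bound for every unit phase
  have babs : ∀ (f : S.domain) (w : ℂ), ‖w‖ = 1 →
      |((starRingEnd ℂ w) * ⟪(f : H), h⟫
          + w * ⟪g, S f + Complex.I • V (f : H)⟫).im| ≤ K * ‖(f : H)‖ := by
    intro f w hw
    set a : ℝ := (⟪(f : H), S f + Complex.I • V (f : H)⟫).im with hadef
    set b : ℝ := ((starRingEnd ℂ w) * ⟪(f : H), h⟫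
        + w * ⟪g, S f + Complex.I • V (f : H)⟫).im with hbdef
    have hquad : ∀ t : ℝ, 0 ≤ a * (t * t) + b * t + d := by
      intro t
      have hk := key f ((t : ℂ) * w)
      have e1 : Complex.normSq ((t : ℂ) * w) = t * t := by
        have : Complex.normSq w = 1 := by
          rw [← Complex.sq_norm]
          simp [hw]
        simp [Complex.normSq_mul, this, Complex.normSq_ofReal, sq]
      have e2 : (starRingEnd ℂ ((t : ℂ) * w)) * ⟪(f : H), h⟫
            + ((t : ℂ) * w) * ⟪g, S f + Complex.I • V (f : H)⟫
          = (t : ℂ) * ((starRingEnd ℂ w) * ⟪(f : H), h⟫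
            + w * ⟪g, S f + Complex.I • V (f : H)⟫) := by
        rw [map_mul, Complex.conj_ofReal]
        ring
      rw [e1, e2] at hk
      rw [Complex.im_ofReal_mul] at hk
      linarith
    have hdisc := discrim_le_zero hquad
    rw [discrim] at hdisc
    have ha0' := ha0 f
    have habd' := habd f
    have hsq : b ^ 2 ≤ (K * ‖(f : H)‖) ^ 2 := by
      have hKsq : (K * ‖(f : H)‖) ^ 2 = 4 * (‖V‖ * d) * ‖(f : H)‖ ^ 2 := by
        have : Real.sqrt (‖V‖ * d) ^ 2 = ‖V‖ * d :=
          Real.sq_sqrt (by positivity)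
        rw [hKdef]; nlinarith [this]
      nlinarith [hdisc, mul_le_mul_of_nonneg_right habd' hd0]
    calc |b| = Real.sqrt (b ^ 2) := (Real.sqrt_sq_eq_abs b).symm
      _ ≤ Real.sqrt ((K * ‖(f : H)‖) ^ 2) := Real.sqrt_le_sqrt hsq
      _ = K * ‖(f : H)‖ := by
          rw [Real.sqrt_sq_eq_abs]
          exact abs_of_nonneg (by positivity)
  -- bound on ⟪g, A f⟫
  have zbound : ∀ f : S.domain,
      ‖⟪g, S f + Complex.I • V (f : H)⟫‖ ≤ (K + ‖h‖) * ‖(f : H)‖ := by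
    intro f
    set z : ℂ := ⟪g, S f + Complex.I • V (f : H)⟫ with hzdef
    by_cases hz : z = 0
    · rw [hz]
      simp only [norm_zero]
      positivity
    · set w : ℂ := Complex.I * (starRingEnd ℂ z) / (‖z‖ : ℂ) with hwdef
      have hzne : (‖z‖ : ℂ) ≠ 0 := by
        simp [norm_eq_zero, hz]
      have hw : ‖w‖ = 1 := by
        rw [hwdef]
        rw [norm_div, norm_mul]
        simp [hz]
      have hwz : (w * z).im = ‖z‖ := by
        have hzz : (starRingEnd ℂ z) * z = ((‖z‖ : ℝ) : ℂ) * ((‖z‖ : ℝ) : ℂ) := by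
          rw [mul_comm, Complex.mul_conj]
          push_cast [Complex.normSq_eq_norm_sq]
          ring
        have hw2 : w * z = Complex.I * ((‖z‖ : ℝ) : ℂ) := by
          rw [hwdef, div_mul_eq_mul_div, mul_assoc, hzz]
          field_simp
        rw [hw2]
        simp
      have hb := babs f w hw
      have hbsplit : ((starRingEnd ℂ w) * ⟪(f : H), h⟫ + w * z).im
          = ((starRingEnd ℂ w) * ⟪(f : H), h⟫).im + ‖z‖ := by
        rw [Complex.add_im, hwz]
      rw [hbsplit] at hb
      have h3 : |((starRingEnd ℂ w) * ⟪(f : H), h⟫).im| ≤ ‖h‖ * ‖(f : H)‖ := by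
        calc |((starRingEnd ℂ w) * ⟪(f : H), h⟫).im|
            ≤ ‖(starRingEnd ℂ w) * ⟪(f : H), h⟫‖ := by
              exact Complex.abs_im_le_norm _
          _ = ‖⟪(f : H), h⟫‖ := by rw [norm_mul]; simp [hw]
          _ ≤ ‖(f : H)‖ * ‖h‖ := norm_inner_le_norm _ _
          _ = ‖h‖ * ‖(f : H)‖ := by ring
      have := abs_le.mp hb
      have := abs_le.mp h3
      have : ‖z‖ ≤ K * ‖(f : H)‖ + ‖h‖ * ‖(f : H)‖ := by
        have h4 := (abs_le.mp hb).2
        have h5 := (abs_le.mp h3).1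
        linarith
      linarith [this]
      -- goal: ‖z‖ ≤ (K + ‖h‖) * ‖f‖
  -- conclude continuity
  rw [LinearPMap.mem_adjoint_domain_iff]
  apply AddMonoidHomClass.continuous_of_bound ((innerₛₗ ℂ g).comp S.toFun)
    (K + ‖h‖ + ‖g‖ * ‖V‖)
  intro f
  have happ : ((innerₛₗ ℂ g).comp S.toFun) f = ⟪g, S f⟫ := rfl
  rw [happ]
  have h2 : ‖⟪g, Complex.I • V (f : H)⟫‖ ≤ ‖g‖ * ‖V‖ * ‖(f : H)‖ := by
    rw [inner_smul_right, norm_mul]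
    simp only [Complex.norm_I, one_mul]
    calc ‖⟪g, V (f : H)⟫‖ ≤ ‖g‖ * ‖V (f : H)‖ := norm_inner_le_norm _ _
      _ ≤ ‖g‖ * (‖V‖ * ‖(f : H)‖) :=
          mul_le_mul_of_nonneg_left (V.le_opNorm _) (norm_nonneg _)
      _ = ‖g‖ * ‖V‖ * ‖(f : H)‖ := by ring
  have hsplit : ⟪g, S f⟫
      = ⟪g, S f + Complex.I • V (f : H)⟫ - ⟪g, Complex.I • V (f : H)⟫ := by
    rw [inner_add_right]; ring
  rw [hsplit]
  have hnf : ‖f‖ = ‖(f : H)‖ := rfl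
  calc ‖⟪g, S f + Complex.I • V (f : H)⟫ - ⟪g, Complex.I • V (f : H)⟫‖
      ≤ ‖⟪g, S f + Complex.I • V (f : H)⟫‖ + ‖⟪g, Complex.I • V (f : H)⟫‖ :=
        norm_sub_le _ _
    _ ≤ (K + ‖h‖) * ‖(f : H)‖ + ‖g‖ * ‖V‖ * ‖(f : H)‖ := add_le_add (zbound f) h2
    _ = (K + ‖h‖ + ‖g‖ * ‖V‖) * ‖f‖ := by rw [hnf]; ring
end
end

section
/- Let S be a closed, densely defined symmetric operator on a complex Hilbert space H and let V be a bounded non-negative selfadjoint operator on H, with square root √V (the unique bounded non-negative selfadjoint operator with √V·√V = V). Let 𝒱 ⊆ D(S*) be a subspace with 𝒱 ∩ D(S) = {0} and let L : 𝒱 → H be linear. Then the operator S_{𝒱,L} + iV, where S_{𝒱,L} has domain D(S) ∔ 𝒱 and acts as f + v ↦ S*(f+v) + Lv, is dissipative — i.e., Im⟨f+v, S*(f+v) + Lv + iV(f+v)⟩ ≥ 0 for all f ∈ D(S), v ∈ 𝒱 — if and only if for every v ∈ 𝒱 there exists k_v ∈ (ker √V)^⊥ with √V k_v = Lv and Im⟨v,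 S*v⟩ ≥ (1/4)‖k_v‖². Moreover, every dissipative extension of A := (S + iV)↾_{D(S)} is of the form S_{𝒱,L} + iV for some such 𝒱 and L. -/
noncomputable section

open Complex

variable {H : Type*} [NormedAddCommGroup H] [InnerProductSpace ℂ H] [CompleteSpace H]

local notation "⟪" x ", " y "⟫" => @inner ℂ _ _ x y

lemma solve_sqrt (sqV : H →L[ℂ] H) (hsq_sa : IsSelfAdjoint sqV) (w : H) (c : ℝ)
    (hc : 0 ≤ c) (hb : ∀ g : H, ‖⟪g, w⟫‖ ^ 2 ≤ 4 * c * ‖sqV g‖ ^ 2) :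
    ∃ k : H, (∀ y : H, sqV y = 0 → ⟪y, k⟫ = 0) ∧ sqV k = w ∧ ‖k‖ ^ 2 ≤ 4 * c := by
  have hadj : ∀ x y : H, ⟪sqV x, y⟫ = ⟪x, sqV y⟫ := fun x y => by
    conv_lhs => rw [← hsq_sa.adjoint_eq]
    exact ContinuousLinearMap.adjoint_inner_left _ _ _
  set C := 2 * Real.sqrt c with hC
  have hC0 : 0 ≤ C := by positivity
  have key : ∀ g g' : H, sqV g = sqV g' → ⟪w, g⟫ = ⟪w, g'⟫ := by
    intro g g' hgg
    have h0 : sqV (g - g') = 0 := by rw [map_sub, hgg, sub_self]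
    have h1 := hb (g - g')
    rw [h0] at h1
    simp only [norm_zero] at h1
    have hz : ⟪g - g', w⟫ = 0 := by
      have h2 : ‖⟪g - g', w⟫‖ ^ 2 ≤ 0 := by simpa using h1
      have h3 : ‖⟪g - g', w⟫‖ = 0 := by nlinarith [norm_nonneg ⟪g - g', w⟫]
      exact norm_eq_zero.mp h3
    have hz' : ⟪w, g - g'⟫ = 0 := by rw [← inner_conj_symm, hz, map_zero]
    rw [inner_sub_right] at hz'
    linear_combination hz'
  set R : Submodule ℂ H := LinearMap.range (sqV : H →ₗ[ℂ] H) with hR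
  have hmem : ∀ r : R, ∃ y : H, sqV y = (r : H) := fun r => r.2
  have spec : ∀ r : R, sqV (hmem r).choose = (r : H) := fun r => (hmem r).choose_spec
  let ℓ : R →ₗ[ℂ] ℂ :=
    { toFun := fun r => ⟪w, (hmem r).choose⟫
      map_add' := fun r s => by
        rw [← inner_add_right]
        exact key _ _ (by rw [spec, map_add, spec, spec]; rfl)
      map_smul' := fun a r => by
        show (⟪w, (hmem (a • r)).choose⟫ : ℂ) = a • ⟪w, (hmem r).choose⟫
        rw [smul_eq_mul, ← inner_smul_right]
        exact key _ _ (by rw [spec, map_smul, spec]; rfl) }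
  have hℓ : ∀ r : R, ℓ r = ⟪w, (hmem r).choose⟫ := fun r => rfl
  have hbnd : ∀ r : R, ‖ℓ r‖ ≤ C * ‖(r : H)‖ := by
    intro r
    have h1 : ‖⟪(hmem r).choose, w⟫‖ ^ 2 ≤ 4 * c * ‖(r : H)‖ ^ 2 := by
      have := hb (hmem r).choose
      rwa [spec r] at this
    rw [hℓ, norm_inner_symm]
    have h2 : (C * ‖(r : H)‖) ^ 2 = 4 * c * ‖(r : H)‖ ^ 2 := by
      rw [hC, mul_pow, mul_pow, Real.sq_sqrt hc]; ring
    have h3 : ‖⟪(hmem r).choose, w⟫‖ ^ 2 ≤ (C * ‖(r : H)‖) ^ 2 := by rw [h2]; exact h1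
    exact le_of_pow_le_pow_left₀ two_ne_zero (by positivity) h3
  let ℓc : R →L[ℂ] ℂ := ℓ.mkContinuous C hbnd
  obtain ⟨g, hg, hgnorm⟩ := exists_extension_norm_eq R ℓc
  set k' := (InnerProductSpace.toDual ℂ H).symm g with hk'def
  have hk' : ∀ x : H, ⟪k', x⟫ = g x := fun x => InnerProductSpace.toDual_symm_apply
  have hsolve' : sqV k' = w := by
    apply ext_inner_right ℂ
    intro y
    rw [hadj, hk']
    have h4 : g (sqV y) = ℓc ⟨sqV y, LinearMap.mem_range_self _ y⟩ :=
      hg ⟨sqV y, LinearMap.mem_range_self _ y⟩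
    rw [h4]
    have h5 : ℓc ⟨sqV y, LinearMap.mem_range_self _ y⟩
        = ⟪w, (hmem ⟨sqV y, LinearMap.mem_range_self _ y⟩).choose⟫ := rfl
    rw [h5]
    exact key _ _ (spec ⟨sqV y, LinearMap.mem_range_self _ y⟩)
  have hk'norm : ‖k'‖ ≤ C := by
    have h6 : ‖k'‖ = ‖g‖ := by
      rw [hk'def]
      exact LinearIsometryEquiv.norm_map _ _
    rw [h6, hgnorm]
    exact ℓ.mkContinuous_norm_le hC0 hbnd
  -- project onto (ker sqV)ᗮ
  set K₀ : Submodule ℂ H := LinearMap.ker (sqV : H →ₗ[ℂ] H) with hK₀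
  have hK₀closed : IsClosed (K₀ : Set H) := by
    have : (K₀ : Set H) = (sqV : H → H) ⁻¹' {0} := by
      ext x; simp [hK₀, LinearMap.mem_ker]
    rw [this]
    exact isClosed_singleton.preimage sqV.continuous
  haveI : CompleteSpace K₀ := hK₀closed.completeSpace_coe
  set K : Submodule ℂ H := K₀ᗮ with hK
  haveI : CompleteSpace K := K₀.isClosed_orthogonal.completeSpace_coe
  set k : H := (K.orthogonalProjectionOnto k' : H) with hk
  have hdiff : k' - k ∈ Kᗮ := K.sub_starProjection_mem_orthogonal k'
  have hKbot : Kᗮ = K₀ := Submodule.orthogonal_orthogonal K₀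
  refine ⟨k, ?_, ?_, ?_⟩
  · intro y hy
    have hyK₀ : y ∈ K₀ := by simpa [hK₀, LinearMap.mem_ker] using hy
    have hkK : k ∈ K := (K.orthogonalProjectionOnto k').2
    exact (Submodule.mem_orthogonal K₀ k).mp hkK y hyK₀
  · have hker : sqV (k' - k) = 0 := by
      have : k' - k ∈ K₀ := hKbot ▸ hdiff
      simpa [hK₀, LinearMap.mem_ker] using this
    have : sqV k' - sqV k = 0 := by rw [← map_sub]; exact hker
    rw [← hsolve']
    exact (sub_eq_zero.mp this).symm
  · have hnk : ‖k‖ ≤ ‖k'‖ := by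
      calc ‖k‖ ≤ ‖K.orthogonalProjectionOnto‖ * ‖k'‖ := (K.orthogonalProjectionOnto).le_opNorm k'
        _ ≤ 1 * ‖k'‖ := by
            exact mul_le_mul_of_nonneg_right (K.orthogonalProjectionOnto_norm_le) (norm_nonneg _)
        _ = ‖k'‖ := one_mul _
    have : ‖k‖ ^ 2 ≤ C ^ 2 := by
      have := hnk.trans hk'norm
      nlinarith [norm_nonneg k]
    calc ‖k‖ ^ 2 ≤ C ^ 2 := this
      _ = 4 * c := by rw [hC, mul_pow, Real.sq_sqrt hc]; ring


/-- With `S` closed densely defined symmetric and `V` bounded non-negative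
selfadjoint with square root `√V`, the operator `S_{𝓥,L} + iV` is dissipative iff for every
`v ∈ 𝓥` there is `k_v ⊥ ker √V` with `√V k_v = L v` and `Im ⟪v, S* v⟫ ≥ ¼ ‖k_v‖²`;
moreover every dissipative extension of `A = S + iV` is of this form. -/
theorem statement16
    (S : H →ₗ.[ℂ] H) (V sqV : H →L[ℂ] H)
    (hSdense : Dense (S.domain : Set H)) (hSclosed : S.IsClosed) (hSsymm : IsSymmetricP S)
    (hVsa : IsSelfAdjoint V) (hVnn : ∀ f : H, 0 ≤ (⟪f, V f⟫).re)
    (hsq_sa : IsSelfAdjoint sqV) (hsq_nn : ∀ f : H, 0 ≤ (⟪f, sqV f⟫).re)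
    (hsq : ∀ x : H, sqV (sqV x) = V x)
    (𝓥 : Submodule ℂ H) (h𝓥 : 𝓥 ≤ S.adjoint.domain) (h𝓥S : 𝓥 ⊓ S.domain = ⊥)
    (L : 𝓥 →ₗ[ℂ] H) :
    ((∀ (f : S.domain) (v : 𝓥) (hfv : (f : H) + (v : H) ∈ S.adjoint.domain),
        0 ≤ (⟪(f : H) + (v : H),
          S.adjoint ⟨(f : H) + (v : H), hfv⟩ + L v + Complex.I • V ((f : H) + (v : H))⟫).im)
      ↔ ∀ v : 𝓥, ∃ k : H, (∀ y : H, sqV y = 0 → ⟪y, k⟫ = 0) ∧ sqV k = L v ∧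
          ∀ hv : (v : H) ∈ S.adjoint.domain,
            (1 / 4) * ‖k‖ ^ 2 ≤ (⟪(v : H), S.adjoint ⟨(v : H), hv⟩⟫).im) ∧
    ∀ B : H →ₗ.[ℂ] H, S.domain ≤ B.domain →
      (∀ (x : S.domain) (hx : (x : H) ∈ B.domain),
        B ⟨(x : H), hx⟩ = S x + Complex.I • V (x : H)) →
      Dissipative B →
      ∃ (𝓦 : Submodule ℂ H) (_ : 𝓦 ≤ S.adjoint.domain) (_ : 𝓦 ⊓ S.domain = ⊥)
        (L' : 𝓦 →ₗ[ℂ] H),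
        B.domain = S.domain ⊔ 𝓦 ∧
        ∀ (f : S.domain) (w : 𝓦) (hB : (f : H) + (w : H) ∈ B.domain)
          (hadj : (f : H) + (w : H) ∈ S.adjoint.domain),
          B ⟨(f : H) + (w : H), hB⟩
            = S.adjoint ⟨(f : H) + (w : H), hadj⟩ + L' w
              + Complex.I • V ((f : H) + (w : H)) := by
  have hadjV : ∀ x y : H, ⟪sqV x, y⟫ = ⟪x, sqV y⟫ := fun x y => by
    conv_lhs => rw [← hsq_sa.adjoint_eq]
    exact ContinuousLinearMap.adjoint_inner_left _ _ _
  have hreV : ∀ u : H, ⟪u, V u⟫ = ((‖sqV u‖ : ℂ)) ^ 2 := fun u => by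
    rw [← hsq u, ← hadjV, inner_self_eq_norm_sq_to_K]
    norm_cast
  have hIFA : S.IsFormalAdjoint S := fun x y => (hSsymm x y).symm
  have hSle : S ≤ S.adjoint := hIFA.le_adjoint hSdense
  have hmemS : ∀ f : S.domain, (f : H) ∈ S.adjoint.domain := fun f => hSle.1 f.2
  have hadjS : ∀ (f : S.domain) (h : (f : H) ∈ S.adjoint.domain),
      S.adjoint ⟨(f : H), h⟩ = S f := fun f h => (hSle.2 rfl).symm
  have hformal : S.adjoint.IsFormalAdjoint S := LinearPMap.adjoint_isFormalAdjoint hSdense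
  have him0 : ∀ f : S.domain, (⟪(f : H), S f⟫).im = 0 := fun f => by
    have h1 : (starRingEnd ℂ) ⟪(f : H), S f⟫ = ⟪(f : H), S f⟫ := by
      rw [inner_conj_symm]; exact (hSsymm f f).symm
    exact Complex.conj_eq_iff_im.mp h1
  have himA : ∀ f : S.domain,
      (⟪(f : H), S f + Complex.I • V (f : H)⟫).im = ‖sqV (f : H)‖ ^ 2 := fun f => by
    rw [inner_add_right, inner_smul_right, Complex.add_im, him0, hreV, Complex.mul_im]
    norm_cast
    simp
  have comp : ∀ (f : S.domain) (v : 𝓥) (hfv : (f : H) + (v : H) ∈ S.adjoint.domain),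
      (⟪(f : H) + (v : H),
        S.adjoint ⟨(f : H) + (v : H), hfv⟩ + L v + Complex.I • V ((f : H) + (v : H))⟫).im
      = (⟪(v : H), S.adjoint ⟨(v : H), h𝓥 v.2⟩⟫).im + (⟪(f : H) + (v : H), (L v : H)⟫).im
        + ‖sqV ((f : H) + (v : H))‖ ^ 2 := by
    intro f v hfv
    have hsplit : S.adjoint ⟨(f : H) + (v : H), hfv⟩
        = S f + S.adjoint ⟨(v : H), h𝓥 v.2⟩ := by
      have h1 : (⟨(f : H) + (v : H), hfv⟩ : S.adjoint.domain)
          = ⟨(f : H), hmemS f⟩ + ⟨(v : H), h𝓥 v.2⟩ := rfl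
      rw [h1, S.adjoint.map_add, hadjS]
    rw [hsplit]
    set av : H := S.adjoint ⟨(v : H), h𝓥 v.2⟩ with hav
    have e1 : ⟪(f : H) + (v : H), (S f + av) + L v + Complex.I • V ((f : H) + (v : H))⟫
        = (⟪(f : H), S f⟫ + (⟪(v : H), S f⟫ + ⟪(f : H), av⟫)) + ⟪(v : H), av⟫
          + ⟪(f : H) + (v : H), (L v : H)⟫
          + Complex.I * ⟪(f : H) + (v : H), V ((f : H) + (v : H))⟫ := by
      simp only [inner_add_right, inner_add_left, inner_smul_right]
      ring
    rw [e1]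
    have h3 : (⟪(v : H), S f⟫ + ⟪(f : H), av⟫).im = 0 := by
      have h := hformal ⟨(v : H), h𝓥 v.2⟩ f
      rw [← hav] at h
      have h2 : (⟪av, (f : H)⟫ : ℂ) = (starRingEnd ℂ) ⟪(f : H), av⟫ := (inner_conj_symm _ _).symm
      rw [← h, h2, Complex.add_im, Complex.conj_im]
      ring
    have h4 : (Complex.I * ⟪(f : H) + (v : H), V ((f : H) + (v : H))⟫).im
        = ‖sqV ((f : H) + (v : H))‖ ^ 2 := by
      rw [hreV, Complex.mul_im]
      norm_cast
      simp
    simp only [Complex.add_im, him0, h3, h4]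
    ring
  constructor
  · constructor
    · intro hdis v
      set cv := (⟪(v : H), S.adjoint ⟨(v : H), h𝓥 v.2⟩⟫).im with hcv
      have h1 : ∀ f : S.domain,
          0 ≤ cv + (⟪(f : H) + (v : H), (L v : H)⟫).im + ‖sqV ((f : H) + (v : H))‖ ^ 2 := by
        intro f
        have hfv : (f : H) + (v : H) ∈ S.adjoint.domain :=
          Submodule.add_mem _ (hmemS f) (h𝓥 v.2)
        have h0 := hdis f v hfv
        rwa [comp f v hfv] at h0
      have hall : ∀ g : H, 0 ≤ cv + (⟪g, (L v : H)⟫).im + ‖sqV g‖ ^ 2 := by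
        set F : H → ℝ := fun g => cv + (⟪g, (L v : H)⟫).im + ‖sqV g‖ ^ 2 with hF
        have hcont : Continuous F := by
          apply Continuous.add
          · apply Continuous.add continuous_const
            exact Complex.continuous_im.comp (Continuous.inner continuous_id continuous_const)
          · exact (continuous_norm.comp sqV.continuous).pow 2
        have hclosed : IsClosed {g : H | 0 ≤ F g} := isClosed_le continuous_const hcont
        intro g
        have h2 : g - (v : H) ∈ closure (S.domain : Set H) := hSdense _
        have h3 : g ∈ closure ((fun x : H => x + (v : H)) '' (S.domain : Set H)) := by
          apply image_closure_subset_closure_image (continuous_add_right ((v : H)))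
          exact ⟨g - (v : H), h2, sub_add_cancel g (v : H)⟩
        have h4 : closure ((fun x : H => x + (v : H)) '' (S.domain : Set H))
            ⊆ {g : H | 0 ≤ F g} := by
          apply closure_minimal _ hclosed
          rintro _ ⟨x, hx, rfl⟩
          exact h1 ⟨x, hx⟩
        exact h4 h3
      have hc : 0 ≤ cv := by simpa using hall 0
      have hbound : ∀ g : H, ‖(⟪g, (L v : H)⟫ : ℂ)‖ ^ 2 ≤ 4 * cv * ‖sqV g‖ ^ 2 := by
        intro g
        set z : ℂ := ⟪g, (L v : H)⟫ with hz
        by_cases hz0 : z = 0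
        · rw [hz0]; simp; positivity
        · have hznorm : ((‖z‖ : ℂ)) ≠ 0 := by
            simpa using norm_ne_zero_iff.mpr hz0
          have hzz : (starRingEnd ℂ) z * z = ((‖z‖ : ℂ)) ^ 2 := by
            rw [mul_comm, Complex.mul_conj]
            norm_cast
            rw [← Complex.sq_norm]
          set μ : ℂ := Complex.I * z / (‖z‖ : ℂ) with hμ
          have hμnorm : ‖μ‖ = 1 := by
            rw [hμ, norm_div, norm_mul, Complex.norm_I, one_mul]
            simp [hz0]
          have e2 : (starRingEnd ℂ) μ * z = -Complex.I * (‖z‖ : ℂ) := by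
            have e2a : (starRingEnd ℂ) μ * z
                = -Complex.I * ((starRingEnd ℂ) z * z) / (‖z‖ : ℂ) := by
              rw [hμ, map_div₀, map_mul, Complex.conj_I, Complex.conj_ofReal]
              ring
            rw [e2a, hzz, sq]
            rw [mul_div_assoc, mul_div_assoc, div_self hznorm, mul_one]
          have hquad : ∀ t : ℝ, 0 ≤ ‖sqV g‖ ^ 2 * (t * t) + (-‖z‖) * t + cv := by
            intro t
            have h5 := hall (((t : ℂ) * μ) • g)
            have e3 : (⟪((t : ℂ) * μ) • g, (L v : H)⟫ : ℂ)
                = (t : ℂ) * ((starRingEnd ℂ) μ * z) := by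
              rw [inner_smul_left, map_mul, Complex.conj_ofReal, ← hz]
              ring
            have e4 : (⟪((t : ℂ) * μ) • g, (L v : H)⟫ : ℂ).im = -(‖z‖ * t) := by
              rw [e3, e2]
              have : (t : ℂ) * (-Complex.I * (‖z‖ : ℂ)) = ((-(‖z‖ * t) : ℝ) : ℂ) * Complex.I := by
                push_cast; ring
              rw [this, Complex.mul_I_im, Complex.ofReal_re]
            have e5 : ‖sqV (((t : ℂ) * μ) • g)‖ ^ 2 = ‖sqV g‖ ^ 2 * (t * t) := by
              rw [map_smul, norm_smul, norm_mul, hμnorm, Complex.norm_real,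
                Real.norm_eq_abs, mul_pow, mul_pow, _root_.sq_abs, one_pow]
              ring
            rw [e4, e5] at h5
            linarith
          have hd := discrim_le_zero hquad
          rw [discrim] at hd
          nlinarith [hd, norm_nonneg (sqV g), sq_nonneg (‖sqV g‖)]
      obtain ⟨k, hk1, hk2, hk3⟩ := solve_sqrt sqV hsq_sa (L v) cv hc hbound
      refine ⟨k, hk1, hk2, ?_⟩
      intro hv
      have : (⟨(v : H), hv⟩ : S.adjoint.domain) = ⟨(v : H), h𝓥 v.2⟩ := rfl
      rw [this, ← hcv]
      linarith
    · intro hk f v hfv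
      rw [comp f v hfv]
      obtain ⟨k, -, hLk, hquarter⟩ := hk v
      have hq := hquarter (h𝓥 v.2)
      have him : (⟪(f : H) + (v : H), (L v : H)⟫).im
          = (⟪sqV ((f : H) + (v : H)), k⟫).im := by
        rw [← hLk, ← hadjV]
      have h5 : |(⟪sqV ((f : H) + (v : H)), k⟫).im| ≤ ‖sqV ((f : H) + (v : H))‖ * ‖k‖ := by
        calc |(⟪sqV ((f : H) + (v : H)), k⟫ : ℂ).im| ≤ ‖(⟪sqV ((f : H) + (v : H)), k⟫ : ℂ)‖ :=
              Complex.abs_im_le_norm _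
          _ ≤ ‖sqV ((f : H) + (v : H))‖ * ‖k‖ := norm_inner_le_norm _ _
      rw [him]
      have h6 := abs_le.mp h5
      nlinarith [sq_nonneg (‖sqV ((f : H) + (v : H))‖ - ‖k‖ / 2), h6.1]
  · intro B hdom hBact hdis
    have hBsub : ∀ u : B.domain, (u : H) ∈ S.adjoint.domain := by
      intro u
      set d := (⟪(u : H), B u⟫).im with hd
      have hd0 : 0 ≤ d := hdis u
      have hquad : ∀ (f : S.domain) (t : ℝ),
          0 ≤ ‖sqV (f : H)‖ ^ 2 * (t * t)
            + (⟪(f : H), B u⟫ + ⟪(u : H), S f + Complex.I • V (f : H)⟫).im * t + d := by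
        intro f t
        have hBf : B ⟨(f : H), hdom f.2⟩ = S f + Complex.I • V (f : H) := hBact f (hdom f.2)
        have h5 := hdis ((t : ℂ) • ⟨(f : H), hdom f.2⟩ + u)
        have ecoe : (((((t : ℂ) • ⟨(f : H), hdom f.2⟩ + u) : B.domain)) : H)
            = (t : ℂ) • (f : H) + (u : H) := rfl
        have eB : B ((t : ℂ) • ⟨(f : H), hdom f.2⟩ + u)
            = (t : ℂ) • B ⟨(f : H), hdom f.2⟩ + B u := by
          rw [B.map_add, B.map_smul]
        rw [ecoe, eB, hBf] at h5
        set Af : H := S f + Complex.I • V (f : H) with hAf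
        have eexp : (⟪(t : ℂ) • (f : H) + (u : H), (t : ℂ) • Af + B u⟫ : ℂ)
            = ((t * t : ℝ) : ℂ) * ⟪(f : H), Af⟫
              + (t : ℂ) * (⟪(f : H), B u⟫ + ⟪(u : H), Af⟫) + ⟪(u : H), B u⟫ := by
          simp only [inner_add_left, inner_add_right, inner_smul_left, inner_smul_right,
            Complex.conj_ofReal]
          push_cast
          ring
        have eim : ((⟪(t : ℂ) • (f : H) + (u : H), (t : ℂ) • Af + B u⟫ : ℂ)).im
            = (t * t) * (⟪(f : H), Af⟫).im
              + t * ((⟪(f : H), B u⟫ + ⟪(u : H), Af⟫)).im + d := by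
          rw [eexp]
          simp only [Complex.add_im, Complex.mul_im, Complex.ofReal_re, Complex.ofReal_im,
            zero_mul, add_zero, mul_zero]
          rw [hd]
        rw [eim] at h5
        have him1 : (⟪(f : H), Af⟫).im = ‖sqV (f : H)‖ ^ 2 := himA f
        rw [him1] at h5
        linarith
      have hb2 : ∀ f : S.domain,
          |(⟪(f : H), B u⟫ + ⟪(u : H), S f + Complex.I • V (f : H)⟫).im|
            ≤ 2 * ‖sqV‖ * Real.sqrt d * ‖(f : H)‖ := by
        intro f
        have hd2 := discrim_le_zero (hquad f)
        rw [discrim] at hd2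
        have hsq1 : ‖sqV (f : H)‖ ≤ ‖sqV‖ * ‖(f : H)‖ := sqV.le_opNorm _
        have hsq0 : (0:ℝ) ≤ ‖sqV (f : H)‖ := norm_nonneg _
        have hM : (0:ℝ) ≤ 2 * ‖sqV‖ * Real.sqrt d * ‖(f : H)‖ := by positivity
        refine le_of_pow_le_pow_left₀ two_ne_zero hM ?_
        rw [_root_.sq_abs]
        have hsqd : Real.sqrt d ^ 2 = d := Real.sq_sqrt hd0
        have hnorm2 : ‖sqV (f : H)‖ ^ 2 ≤ (‖sqV‖ * ‖(f : H)‖) ^ 2 := by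
          apply pow_le_pow_left₀ hsq0 hsq1
        nlinarith [hd2, hnorm2, Real.sqrt_nonneg d, norm_nonneg (f : H),
          ContinuousLinearMap.opNorm_nonneg sqV]
      -- δ bound
      set C2 : ℝ := 2 * ‖sqV‖ * Real.sqrt d with hC2
      have hC20 : 0 ≤ C2 := by positivity
      have hdelta : ∀ f : S.domain,
          ‖(⟪(f : H), B u⟫ - (starRingEnd ℂ) ⟪(u : H), S f + Complex.I • V (f : H)⟫ : ℂ)‖
            ≤ 2 * C2 * ‖(f : H)‖ := by
        intro f
        set α : ℂ := ⟪(f : H), B u⟫ with hα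
        set β : ℂ := ⟪(u : H), S f + Complex.I • V (f : H)⟫ with hβ
        have haux : ∀ g : S.domain, (⟪(g : H), B u⟫
            - (starRingEnd ℂ) ⟪(u : H), S g + Complex.I • V (g : H)⟫ : ℂ).im
            = (⟪(g : H), B u⟫ + ⟪(u : H), S g + Complex.I • V (g : H)⟫).im := by
          intro g
          rw [Complex.sub_im, Complex.add_im, Complex.conj_im]
          ring
        have h7 : |(α - (starRingEnd ℂ) β).im| ≤ C2 * ‖(f : H)‖ := by
          rw [hα, hβ, haux f]
          exact hb2 f
        -- apply to I • f
        have hIf : ((Complex.I • f : S.domain) : H) = Complex.I • (f : H) := rfl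
        have hSIf : S (Complex.I • f) = Complex.I • S f := S.map_smul _ _
        have hVIf : V (Complex.I • (f : H)) = Complex.I • V (f : H) := map_smul _ _ _
        have hαI : (⟪((Complex.I • f : S.domain) : H), B u⟫ : ℂ) = -Complex.I * α := by
          rw [hIf, inner_smul_left, Complex.conj_I, hα]
        have hβI : (⟪(u : H), S (Complex.I • f)
            + Complex.I • V ((Complex.I • f : S.domain) : H)⟫ : ℂ) = Complex.I * β := by
          rw [hIf, hSIf, hVIf, hβ]
          rw [smul_smul, inner_add_right, inner_add_right, inner_smul_right, inner_smul_right,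
            inner_smul_right]
          ring
        have h8 : |(-Complex.I * α - (starRingEnd ℂ) (Complex.I * β)).im| ≤ C2 * ‖(f : H)‖ := by
          have h11 := hb2 (Complex.I • f)
          rw [← haux (Complex.I • f), hαI, hβI] at h11
          have h10 : ‖((Complex.I • f : S.domain) : H)‖ = ‖(f : H)‖ := by
            rw [hIf, norm_smul, Complex.norm_I, one_mul]
          rwa [h10] at h11
        have h12 : (-Complex.I * α - (starRingEnd ℂ) (Complex.I * β)).im
            = -((α - (starRingEnd ℂ) β).re) := by
          rw [map_mul, Complex.conj_I]
          simp [Complex.sub_im, Complex.mul_im, Complex.conj_re, Complex.conj_im,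
            Complex.sub_re, Complex.mul_re]
          ring
        rw [h12, abs_neg] at h8
        calc ‖(α - (starRingEnd ℂ) β : ℂ)‖
            ≤ |(α - (starRingEnd ℂ) β).re| + |(α - (starRingEnd ℂ) β).im| :=
              Complex.norm_le_abs_re_add_abs_im _
          _ ≤ C2 * ‖(f : H)‖ + C2 * ‖(f : H)‖ := add_le_add h8 h7
          _ = 2 * C2 * ‖(f : H)‖ := by ring
      -- bound on ⟪u, S f⟫
      have hfinal : ∀ f : S.domain,
          ‖(⟪(u : H), S f⟫ : ℂ)‖ ≤ (‖B u‖ + 2 * C2 + ‖V‖ * ‖(u : H)‖) * ‖(f : H)‖ := by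
        intro f
        set α : ℂ := ⟪(f : H), B u⟫ with hα
        set β : ℂ := ⟪(u : H), S f + Complex.I • V (f : H)⟫ with hβ
        have e13 : (⟪(u : H), S f⟫ : ℂ) = β - Complex.I * ⟪(u : H), V (f : H)⟫ := by
          rw [hβ, inner_add_right, inner_smul_right]
          ring
        have e14 : ‖β‖ ≤ ‖α‖ + 2 * C2 * ‖(f : H)‖ := by
          have : β = (starRingEnd ℂ) ((starRingEnd ℂ) β) := by rw [Complex.conj_conj]
          calc ‖β‖ = ‖(starRingEnd ℂ) β‖ := (RCLike.norm_conj _).symm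
            _ = ‖α - (α - (starRingEnd ℂ) β)‖ := by ring_nf
            _ ≤ ‖α‖ + ‖α - (starRingEnd ℂ) β‖ := norm_sub_le _ _
            _ ≤ ‖α‖ + 2 * C2 * ‖(f : H)‖ := by linarith [hdelta f]
        have e15 : ‖α‖ ≤ ‖B u‖ * ‖(f : H)‖ := by
          rw [hα]
          calc ‖(⟪(f : H), B u⟫ : ℂ)‖ ≤ ‖(f : H)‖ * ‖B u‖ := norm_inner_le_norm _ _
            _ = ‖B u‖ * ‖(f : H)‖ := by ring
        have e16 : ‖(⟪(u : H), V (f : H)⟫ : ℂ)‖ ≤ ‖(u : H)‖ * (‖V‖ * ‖(f : H)‖) := by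
          calc ‖(⟪(u : H), V (f : H)⟫ : ℂ)‖ ≤ ‖(u : H)‖ * ‖V (f : H)‖ := norm_inner_le_norm _ _
            _ ≤ ‖(u : H)‖ * (‖V‖ * ‖(f : H)‖) := by
                have := V.le_opNorm (f : H)
                exact mul_le_mul_of_nonneg_left this (norm_nonneg _)
        rw [e13]
        calc ‖(β - Complex.I * ⟪(u : H), V (f : H)⟫ : ℂ)‖
            ≤ ‖β‖ + ‖Complex.I * ⟪(u : H), V (f : H)⟫‖ := norm_sub_le _ _
          _ = ‖β‖ + ‖(⟪(u : H), V (f : H)⟫ : ℂ)‖ := by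
              rw [norm_mul, Complex.norm_I, one_mul]
          _ ≤ (‖B u‖ * ‖(f : H)‖ + 2 * C2 * ‖(f : H)‖) + ‖(u : H)‖ * (‖V‖ * ‖(f : H)‖) := by
              linarith [e14, e15, e16]
          _ = (‖B u‖ + 2 * C2 + ‖V‖ * ‖(u : H)‖) * ‖(f : H)‖ := by ring
      rw [LinearPMap.mem_adjoint_domain_iff]
      exact AddMonoidHomClass.continuous_of_bound ((innerₛₗ ℂ ((u : H))).comp S.toFun)
        (‖B u‖ + 2 * C2 + ‖V‖ * ‖(u : H)‖) hfinal
    -- construct the complement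
    obtain ⟨p, hp⟩ := Submodule.exists_isCompl (S.domain.comap B.domain.subtype)
    set 𝓦 : Submodule ℂ H := p.map B.domain.subtype with h𝓦
    have h𝓦B : 𝓦 ≤ B.domain := by
      rintro x ⟨y, hy, rfl⟩
      exact y.2
    have h𝓦adj : 𝓦 ≤ S.adjoint.domain := by
      rintro x ⟨y, hy, rfl⟩
      exact hBsub y
    have h𝓦S : 𝓦 ⊓ S.domain = ⊥ := by
      rw [Submodule.eq_bot_iff]
      rintro x ⟨hx𝓦, hxS⟩
      obtain ⟨y, hy, rfl⟩ := hx𝓦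
      have hySd : y ∈ S.domain.comap B.domain.subtype := hxS
      have hy0 : y ∈ (⊥ : Submodule ℂ B.domain) := by
        rw [← hp.inf_eq_bot]
        exact ⟨hySd, hy⟩
      rw [Submodule.mem_bot] at hy0
      rw [hy0]
      rfl
    have hdomeq : B.domain = S.domain ⊔ 𝓦 := by
      apply le_antisymm
      · intro x hx
        have hxt : (⟨x, hx⟩ : B.domain) ∈ (S.domain.comap B.domain.subtype) ⊔ p := by
          rw [hp.sup_eq_top]
          trivial
        obtain ⟨a, ha, b, hb, hab⟩ := Submodule.mem_sup.mp hxt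
        apply Submodule.mem_sup.mpr
        refine ⟨(a : H), ha, (b : H), ⟨b, hb, rfl⟩, ?_⟩
        have := congrArg (Subtype.val) hab
        simpa using this
      · apply sup_le hdom h𝓦B
    set L' : 𝓦 →ₗ[ℂ] H :=
      (B.toFun.comp (Submodule.inclusion h𝓦B))
        - (S.adjoint.toFun.comp (Submodule.inclusion h𝓦adj))
        - ((Complex.I • (V : H →ₗ[ℂ] H)).comp 𝓦.subtype) with hL'
    refine ⟨𝓦, h𝓦adj, h𝓦S, L', hdomeq, ?_⟩
    intro f w hB hadj
    have hfB : (f : H) ∈ B.domain := hdom f.2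
    have hwB : (w : H) ∈ B.domain := h𝓦B w.2
    have hsplitB : B ⟨(f : H) + (w : H), hB⟩ = B ⟨(f : H), hfB⟩ + B ⟨(w : H), hwB⟩ := by
      have h1 : (⟨(f : H) + (w : H), hB⟩ : B.domain) = ⟨(f : H), hfB⟩ + ⟨(w : H), hwB⟩ := rfl
      rw [h1, B.map_add]
    have hsplitA : S.adjoint ⟨(f : H) + (w : H), hadj⟩
        = S f + S.adjoint ⟨(w : H), h𝓦adj w.2⟩ := by
      have h1 : (⟨(f : H) + (w : H), hadj⟩ : S.adjoint.domain)
          = ⟨(f : H), hmemS f⟩ + ⟨(w : H), h𝓦adj w.2⟩ := rfl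
      rw [h1, S.adjoint.map_add, hadjS]
    have hL'w : L' w = B ⟨(w : H), hwB⟩ - S.adjoint ⟨(w : H), h𝓦adj w.2⟩
        - Complex.I • V (w : H) := rfl
    rw [hsplitB, hsplitA, hBact f hfB, hL'w, map_add]
    rw [smul_add]
    abel
end
end

section
/- Let S be a closed, densely defined symmetric operator on a complex Hilbert space H, let V be a bounded non-negative selfadjoint operator on H, let 𝒱 ⊆ D(S*) be a subspace with 𝒱 ∩ D(S) = {0}, and let L : 𝒱 → H be linear. Assume that the proper extension S_𝒱 := S*↾_{D(S) ∔ 𝒱} is symmetric, i.e., Im⟨ψ, S*ψ⟩ = 0 for all ψ ∈ D(S) ∔ 𝒱. Then: (a) if S_{𝒱,L} + iV (where S_{𝒱,L} has domain D(S) ∔ 𝒱 and acts as f + v ↦ S*(f+v) + Lv) is dissipative, then L = 0; (b) if L ≠ 0, then the imaginary part of S_{𝒱,L} + iV is not bounded from below: for every γ ≥ 0 there exists ψ ∈ D(S) ∔ 𝒱, ψ = f + v with f ∈ D(S), v ∈ 𝒱, such that Im⟨ψ, S*ψ + Lv + iVψ⟩ < −γ‖ψ‖². -/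
noncomputable section

open Complex

variable {H : Type*} [NormedAddCommGroup H] [InnerProductSpace ℂ H] [CompleteSpace H]

local notation "⟪" x ", " y "⟫" => @inner ℂ _ _ x y

/-- Auxiliary: if `L v ≠ 0`, one can find `f ∈ D(S)` making the relevant quantity
arbitrarily negative relative to `‖f + v‖²`. -/
theorem aux_key
    (S : H →ₗ.[ℂ] H) (V : H →L[ℂ] H)
    (hSdense : Dense (S.domain : Set H))
    (hVnn : ∀ f : H, 0 ≤ (⟪f, V f⟫).re)
    (𝓥 : Submodule ℂ H)
    (L : 𝓥 →ₗ[ℂ] H)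
    (v : 𝓥) (hLv : L v ≠ 0) (γ : ℝ) (hγ : 0 ≤ γ) :
    ∃ f : S.domain,
      (⟪(f : H) + (v : H), L v⟫).im + (⟪(f : H) + (v : H), V ((f : H) + (v : H))⟫).re
        < -γ * ‖(f : H) + (v : H)‖ ^ 2 := by
  set w : H := L v with hw
  have hwn : (0:ℝ) < ‖w‖ ^ 2 := by
    have := norm_pos_iff.mpr hLv
    positivity
  set A : ℝ := (⟪w, V w⟫).re + γ * ‖w‖ ^ 2 with hA
  have hA0 : 0 ≤ A := by
    have := hVnn w
    have : 0 ≤ γ * ‖w‖ ^ 2 := by positivity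
    simp only [hA]; linarith [hVnn w]
  set ε : ℝ := ‖w‖ ^ 2 / (2 * (A + 1)) with hε
  have hε0 : 0 < ε := by positivity
  have hεA : ε * A ≤ ‖w‖ ^ 2 / 2 := by
    rw [hε]
    rw [div_mul_eq_mul_div, div_le_div_iff₀ (by positivity) (by norm_num)]
    nlinarith
  -- the continuous function
  set F : H → ℝ := fun ψ => (⟪ψ, w⟫).im + (⟪ψ, V ψ⟫).re + γ * ‖ψ‖ ^ 2 with hF
  have hFcont : Continuous F := by
    apply Continuous.add
    apply Continuous.add
    · exact Complex.continuous_im.comp (continuous_id.inner continuous_const)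
    · exact Complex.continuous_re.comp (continuous_id.inner V.continuous)
    · exact (continuous_const.mul ((continuous_norm).pow 2))
  set ψ₀ : H := ((ε : ℂ) * Complex.I) • w with hψ₀
  have hFψ₀ : F ψ₀ < 0 := by
    have h1 : (⟪ψ₀, w⟫).im = -ε * ‖w‖ ^ 2 := by
      rw [hψ₀, inner_smul_left, inner_self_eq_norm_sq_to_K]
      simp [Complex.mul_im, ← Complex.ofReal_pow]
    have h2 : (⟪ψ₀, V ψ₀⟫).re = ε ^ 2 * (⟪w, V w⟫).re := by
      rw [hψ₀, map_smul, inner_smul_left, inner_smul_right]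
      have h : (starRingEnd ℂ) ((ε:ℂ) * Complex.I) * ((ε:ℂ) * Complex.I)
          = ((ε^2 : ℝ) : ℂ) := by
        rw [map_mul, Complex.conj_I, Complex.conj_ofReal]
        push_cast
        ring_nf
        rw [Complex.I_sq]
        ring
      rw [← mul_assoc, h, Complex.re_ofReal_mul]
    have h3 : ‖ψ₀‖ ^ 2 = ε ^ 2 * ‖w‖ ^ 2 := by
      have h : ‖((ε:ℂ) * Complex.I)‖ = ε := by
        simp [abs_of_pos hε0]
      rw [hψ₀, norm_smul, h]
      ring
    have : F ψ₀ = -ε * ‖w‖ ^ 2 + ε ^ 2 * A := by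
      rw [hF]; simp only [h1, h2, h3, hA]; ring
    rw [this]
    have : ε ^ 2 * A = ε * (ε * A) := by ring
    nlinarith
  -- use density
  have hopen : IsOpen {x : H | F (x + (v : H)) < 0} :=
    isOpen_lt (hFcont.comp (continuous_id.add continuous_const)) continuous_const
  have hmem : (ψ₀ - (v : H)) ∈ {x : H | F (x + (v : H)) < 0} := by
    simpa using hFψ₀
  obtain ⟨f, hfS, hfF⟩ := hSdense.exists_mem_open hopen ⟨_, hmem⟩
  refine ⟨⟨f, hfS⟩, ?_⟩
  have := hfF
  simp only [Set.mem_setOf_eq, hF] at this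
  push_cast
  linarith

/-- If the proper extension `S_𝓥 = S*↾_{D(S) ∔ 𝓥}` is symmetric then
(a) dissipativity of `S_{𝓥,L} + iV` forces `L = 0`, and (b) if `L ≠ 0` the imaginary part
of `S_{𝓥,L} + iV` is not bounded from below. -/
theorem statement17
    (S : H →ₗ.[ℂ] H) (V : H →L[ℂ] H)
    (hSdense : Dense (S.domain : Set H)) (hSclosed : S.IsClosed) (hSsymm : IsSymmetricP S)
    (hVsa : IsSelfAdjoint V) (hVnn : ∀ f : H, 0 ≤ (⟪f, V f⟫).re)
    (𝓥 : Submodule ℂ H) (h𝓥 : 𝓥 ≤ S.adjoint.domain) (h𝓥S : 𝓥 ⊓ S.domain = ⊥)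
    (L : 𝓥 →ₗ[ℂ] H)
    (hsymm𝓥 : ∀ (f : S.domain) (v : 𝓥) (hfv : (f : H) + (v : H) ∈ S.adjoint.domain),
      (⟪(f : H) + (v : H), S.adjoint ⟨(f : H) + (v : H), hfv⟩⟫).im = 0) :
    ((∀ (f : S.domain) (v : 𝓥) (hfv : (f : H) + (v : H) ∈ S.adjoint.domain),
        0 ≤ (⟪(f : H) + (v : H),
          S.adjoint ⟨(f : H) + (v : H), hfv⟩ + L v + Complex.I • V ((f : H) + (v : H))⟫).im)
      → ∀ v : 𝓥, L v = 0) ∧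
    ((∃ v : 𝓥, L v ≠ 0) → ∀ γ : ℝ, 0 ≤ γ →
      ∃ (f : S.domain) (v : 𝓥) (hfv : (f : H) + (v : H) ∈ S.adjoint.domain),
        (⟪(f : H) + (v : H),
          S.adjoint ⟨(f : H) + (v : H), hfv⟩ + L v + Complex.I • V ((f : H) + (v : H))⟫).im
          < -γ * ‖(f : H) + (v : H)‖ ^ 2) := by
  -- D(S) ⊆ D(S*)
  have hDsub : ∀ f : S.domain, (f : H) ∈ S.adjoint.domain := by
    intro f
    exact S.mem_adjoint_domain_of_exists _ ⟨S f, fun x => (hSsymm f x).symm⟩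
  have hfvmem : ∀ (f : S.domain) (v : 𝓥), (f : H) + (v : H) ∈ S.adjoint.domain :=
    fun f v => S.adjoint.domain.add_mem (hDsub f) (h𝓥 v.2)
  -- rewrite the full imaginary part
  have hIm : ∀ (f : S.domain) (v : 𝓥) (hfv : (f : H) + (v : H) ∈ S.adjoint.domain),
      (⟪(f : H) + (v : H),
        S.adjoint ⟨(f : H) + (v : H), hfv⟩ + L v + Complex.I • V ((f : H) + (v : H))⟫).im
      = (⟪(f : H) + (v : H), L v⟫).im
        + (⟪(f : H) + (v : H), V ((f : H) + (v : H))⟫).re := by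
    intro f v hfv
    rw [inner_add_right, inner_add_right, inner_smul_right]
    have h0 := hsymm𝓥 f v hfv
    simp [Complex.add_im, h0, Complex.mul_im, Complex.I_re, Complex.I_im]
    simp only [inner_add_left, inner_add_right, map_add, Complex.add_re, Complex.add_im]
  constructor
  · intro hdiss v
    by_contra hLv
    obtain ⟨f, hf⟩ := aux_key S V hSdense hVnn 𝓥 L v hLv 0 le_rfl
    have h1 := hdiss f v (hfvmem f v)
    rw [hIm f v (hfvmem f v)] at h1
    have hz : -(0:ℝ) * ‖(f : H) + (v : H)‖ ^ 2 = 0 := by ring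
    rw [hz] at hf
    linarith
  · rintro ⟨v, hLv⟩ γ hγ
    obtain ⟨f, hf⟩ := aux_key S V hSdense hVnn 𝓥 L v hLv γ hγ
    exact ⟨f, v, hfvmem f v, by rw [hIm f v (hfvmem f v)]; exact hf⟩
end
end

section
/- Let S be a closed, densely defined symmetric operator on a complex Hilbert space H and let 𝒱 ⊆ D(S*) be a subspace with 𝒱 ∩ D(S) = {0}. Assume there exists v ∈ 𝒱 with Im⟨v, S*v⟩ < 0 (i.e., the proper extension S_𝒱 = S*↾_{D(S) ∔ 𝒱} is not dissipative). Then for every linear map L : 𝒱 → H and every bounded non-negative selfadjoint operator V on H, the operator S_{𝒱,L} + iV (where S_{𝒱,L} has domain D(S) ∔ 𝒱 and acts as f + v ↦ S*(f+v) + Lv) is not dissipative: there exist f ∈ D(S) and v ∈ 𝒱 with Im⟨f+v, S*(f+v) + Lv + iV(f+v)⟩ < 0. -/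
noncomputable section

open Complex

variable {H : Type*} [NormedAddCommGroup H] [InnerProductSpace ℂ H] [CompleteSpace H]

local notation "⟪" x ", " y "⟫" => @inner ℂ _ _ x y

/-- If the proper extension `S_𝓥` fails to be dissipative at some
`v₀ ∈ 𝓥`, then no `S_{𝓥,L} + iV` with `V` bounded non-negative selfadjoint is
dissipative. -/
theorem statement18
    (S : H →ₗ.[ℂ] H)
    (hSdense : Dense (S.domain : Set H)) (hSclosed : S.IsClosed) (hSsymm : IsSymmetricP S)
    (𝓥 : Submodule ℂ H) (h𝓥 : 𝓥 ≤ S.adjoint.domain) (h𝓥S : 𝓥 ⊓ S.domain = ⊥)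
    (v₀ : 𝓥) (hv₀ : (v₀ : H) ∈ S.adjoint.domain)
    (hneg : (⟪(v₀ : H), S.adjoint ⟨(v₀ : H), hv₀⟩⟫).im < 0) :
    ∀ (L : 𝓥 →ₗ[ℂ] H) (V : H →L[ℂ] H), IsSelfAdjoint V →
      (∀ f : H, 0 ≤ (⟪f, V f⟫).re) →
      ∃ (f : S.domain) (v : 𝓥) (hfv : (f : H) + (v : H) ∈ S.adjoint.domain),
        (⟪(f : H) + (v : H),
          S.adjoint ⟨(f : H) + (v : H), hfv⟩ + L v + Complex.I • V ((f : H) + (v : H))⟫).im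
          < 0 := by
  intro L V _hVsa _hVpos
  -- `S` is a formal adjoint of itself, hence `S ≤ S.adjoint`.
  have hformal : S.IsFormalAdjoint S := fun x y => (hSsymm x y).symm
  have hle : S ≤ S.adjoint := LinearPMap.IsFormalAdjoint.le_adjoint hSdense hformal
  set c : ℝ := -(⟪(v₀ : H), S.adjoint ⟨(v₀ : H), hv₀⟩⟫).im with hc
  have hcpos : 0 < c := by simpa [hc] using hneg
  set a : ℝ := ‖L v₀‖ with ha
  set b : ℝ := ‖V‖ with hb
  have hab : 0 < a + b + 1 := by positivity
  set ε : ℝ := min 1 (c / (2 * (a + b + 1))) with hε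
  have hεpos : 0 < ε := lt_min one_pos (by positivity)
  have hε1 : ε ≤ 1 := min_le_left _ _
  have hε2 : ε ≤ c / (2 * (a + b + 1)) := min_le_right _ _
  -- choose `f₀ ∈ D(S)` with `‖f₀ + v₀‖ < ε`
  obtain ⟨f₀, hf₀mem, hf₀close⟩ :=
    Metric.mem_closure_iff.mp (hSdense (-(v₀ : H))) ε hεpos
  have hψ : ‖f₀ + (v₀ : H)‖ < ε := by
    have : dist (-(v₀ : H)) f₀ = ‖f₀ + (v₀ : H)‖ := by
      rw [dist_eq_norm]
      rw [show -(v₀ : H) - f₀ = -(f₀ + (v₀ : H)) by abel, norm_neg]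
    linarith [this ▸ hf₀close]
  have hf₀adj : f₀ ∈ S.adjoint.domain := hle.1 hf₀mem
  refine ⟨⟨f₀, hf₀mem⟩, v₀, S.adjoint.domain.add_mem hf₀adj hv₀, ?_⟩
  set ψ : H := f₀ + (v₀ : H) with hψdef
  -- split the adjoint
  have hadd : S.adjoint ⟨ψ, S.adjoint.domain.add_mem hf₀adj hv₀⟩
      = S.adjoint ⟨f₀, hf₀adj⟩ + S.adjoint ⟨(v₀ : H), hv₀⟩ := by
    have : (⟨ψ, S.adjoint.domain.add_mem hf₀adj hv₀⟩ : S.adjoint.domain)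
        = ⟨f₀, hf₀adj⟩ + ⟨(v₀ : H), hv₀⟩ := rfl
    rw [this, LinearPMap.map_add]
  have hSf : S.adjoint ⟨f₀, hf₀adj⟩ = S ⟨f₀, hf₀mem⟩ := (hle.2 rfl).symm
  -- the imaginary part of `⟪ψ, S† ψ⟫` is exactly `-c`
  have key : (⟪ψ, S.adjoint ⟨ψ, S.adjoint.domain.add_mem hf₀adj hv₀⟩⟫).im = -c := by
    rw [hadd, hSf]
    have e1 : (⟪f₀, S ⟨f₀, hf₀mem⟩⟫).im = 0 := by
      have h := hSsymm ⟨f₀, hf₀mem⟩ ⟨f₀, hf₀mem⟩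
      rw [← inner_conj_symm ((S ⟨f₀, hf₀mem⟩ : H)) f₀] at h
      have h2 := congrArg Complex.im h
      simp only [Complex.conj_im] at h2
      have h3 : (⟪f₀, S ⟨f₀, hf₀mem⟩⟫).im = ((⟪((⟨f₀, hf₀mem⟩ : S.domain) : H),
          S ⟨f₀, hf₀mem⟩⟫)).im := rfl
      rw [h3]
      linarith [h2]
    have e2 : ⟪f₀, S.adjoint ⟨(v₀ : H), hv₀⟩⟫
        = (starRingEnd ℂ) ⟪(v₀ : H), S ⟨f₀, hf₀mem⟩⟫ := by
      rw [← inner_conj_symm]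
      congr 1
      exact LinearPMap.adjoint_isFormalAdjoint hSdense ⟨(v₀ : H), hv₀⟩ ⟨f₀, hf₀mem⟩
    rw [hψdef, inner_add_right, inner_add_left, inner_add_left]
    have e3 : (⟪(v₀ : H), S ⟨f₀, hf₀mem⟩⟫ : ℂ)
        = ⟪((v₀ : H)), ((S ⟨f₀, hf₀mem⟩ : H))⟫ := rfl
    simp only [Complex.add_im, e1, e2, Complex.conj_im]
    rw [hc]
    ring
  show (⟪ψ, S.adjoint ⟨ψ, S.adjoint.domain.add_mem hf₀adj hv₀⟩ + L v₀
      + Complex.I • V ψ⟫).im < 0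
  rw [inner_add_right, inner_add_right]
  simp only [Complex.add_im]
  rw [key]
  -- bound the remaining terms
  have hL : (⟪ψ, L v₀⟫).im ≤ ε * a := by
    calc (⟪ψ, L v₀⟫).im ≤ |(⟪ψ, L v₀⟫).im| := le_abs_self _
      _ ≤ ‖⟪ψ, L v₀⟫‖ := by
          exact Complex.abs_im_le_norm _
      _ ≤ ‖ψ‖ * ‖L v₀‖ := norm_inner_le_norm _ _
      _ ≤ ε * a := by
          apply mul_le_mul hψ.le le_rfl (norm_nonneg _) hεpos.le
  have hVb : (⟪ψ, Complex.I • V ψ⟫).im ≤ ε * b := by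
    have : ⟪ψ, Complex.I • V ψ⟫ = Complex.I * ⟪ψ, V ψ⟫ := by
      rw [inner_smul_right]
    rw [this]
    have him : (Complex.I * ⟪ψ, V ψ⟫).im = (⟪ψ, V ψ⟫).re := by
      simp [Complex.mul_im]
    rw [him]
    calc (⟪ψ, V ψ⟫).re ≤ |(⟪ψ, V ψ⟫).re| := le_abs_self _
      _ ≤ ‖⟪ψ, V ψ⟫‖ := by
          exact Complex.abs_re_le_norm _
      _ ≤ ‖ψ‖ * ‖V ψ‖ := norm_inner_le_norm _ _
      _ ≤ ‖ψ‖ * (‖V‖ * ‖ψ‖) := by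
          apply mul_le_mul_of_nonneg_left (V.le_opNorm ψ) (norm_nonneg _)
      _ = ‖V‖ * (‖ψ‖ * ‖ψ‖) := by ring
      _ ≤ ‖V‖ * (ε * 1) := by
          apply mul_le_mul_of_nonneg_left _ (norm_nonneg _)
          have h1 : ‖ψ‖ ≤ ε := hψ.le
          have h2 : ‖ψ‖ ≤ 1 := h1.trans hε1
          exact mul_le_mul h1 h2 (norm_nonneg _) hεpos.le
      _ = ε * b := by rw [hb]; ring
  have hεsmall : ε * (a + b) < c := by
    have h1 : ε * (a + b) ≤ (c / (2 * (a + b + 1))) * (a + b) := by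
      apply mul_le_mul_of_nonneg_right hε2 (by positivity)
    have h2 : (c / (2 * (a + b + 1))) * (a + b) < c := by
      rw [div_mul_eq_mul_div, div_lt_iff₀ (by positivity)]
      nlinarith [norm_nonneg (L v₀), norm_nonneg V]
    linarith
  nlinarith [hL, hVb, hεsmall]
end
end

section
/- Let S be a closed, densely defined symmetric operator on a complex Hilbert space H and let 𝒱 ⊆ D(S*) be a subspace with 𝒱 ∩ D(S) = {0}. Assume there exists ε > 0 such that Im⟨v, S*v⟩ ≥ ε‖v‖² for all v ∈ 𝒱, and let L : 𝒱 → H be a bounded linear map with ‖Lv‖ ≤ M‖v‖ for all v ∈ 𝒱. Then the operator S_{𝒱,L} (domain D(S) ∔ 𝒱, acting as f + v ↦ S*(f+v) + Lv) satisfies Im⟨ψ, S_{𝒱,L}ψ⟩ ≥ −(M²/(4ε))‖ψ‖² for all ψ ∈ D(S) ∔ 𝒱. In particular, for every bounded non-negative selfadjoint operator V on H with V ≥ M²/(4ε) (i.e., ⟨h, Vh⟩ ≥ (M²/(4ε))‖h‖² for all h ∈ H), the operator S_{𝒱,L} + iV is dissipative: Im⟨ψ, S_{𝒱,L}ψ +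 iVψ⟩ ≥ 0 for all ψ ∈ D(S) ∔ 𝒱. -/
noncomputable section

open Complex

variable {H : Type*} [NormedAddCommGroup H] [InnerProductSpace ℂ H] [CompleteSpace H]

local notation "⟪" x ", " y "⟫" => @inner ℂ _ _ x y

/-- If `Im ⟪v, S* v⟫ ≥ ε ‖v‖²` on `𝓥` and `‖L v‖ ≤ M ‖v‖`, then the
imaginary part of `S_{𝓥,L}` is bounded below by `-(M²/(4ε))`, and `S_{𝓥,L} + iV` is
dissipative for every bounded non-negative selfadjoint `V ≥ M²/(4ε)`. -/
theorem statement19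
    (S : H →ₗ.[ℂ] H)
    (hSdense : Dense (S.domain : Set H)) (hSclosed : S.IsClosed) (hSsymm : IsSymmetricP S)
    (𝓥 : Submodule ℂ H) (h𝓥 : 𝓥 ≤ S.adjoint.domain) (h𝓥S : 𝓥 ⊓ S.domain = ⊥)
    (L : 𝓥 →ₗ[ℂ] H)
    (ε : ℝ) (hε : 0 < ε)
    (hlower : ∀ (v : 𝓥) (hv : (v : H) ∈ S.adjoint.domain),
      ε * ‖(v : H)‖ ^ 2 ≤ (⟪(v : H), S.adjoint ⟨(v : H), hv⟩⟫).im)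
    (M : ℝ) (hM : ∀ v : 𝓥, ‖L v‖ ≤ M * ‖(v : H)‖) :
    (∀ (f : S.domain) (v : 𝓥) (hfv : (f : H) + (v : H) ∈ S.adjoint.domain),
      -(M ^ 2 / (4 * ε)) * ‖(f : H) + (v : H)‖ ^ 2
        ≤ (⟪(f : H) + (v : H), S.adjoint ⟨(f : H) + (v : H), hfv⟩ + L v⟫).im) ∧
    ∀ V : H →L[ℂ] H, IsSelfAdjoint V →
      (∀ h : H, M ^ 2 / (4 * ε) * ‖h‖ ^ 2 ≤ (⟪h, V h⟫).re) →
      ∀ (f : S.domain) (v : 𝓥) (hfv : (f : H) + (v : H) ∈ S.adjoint.domain),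
        0 ≤ (⟪(f : H) + (v : H),
          S.adjoint ⟨(f : H) + (v : H), hfv⟩ + L v + Complex.I • V ((f : H) + (v : H))⟫).im  := by
  have key : ∀ (f : S.domain) (v : 𝓥) (hfv : (f : H) + (v : H) ∈ S.adjoint.domain),
      -(M ^ 2 / (4 * ε)) * ‖(f : H) + (v : H)‖ ^ 2
        ≤ (⟪(f : H) + (v : H), S.adjoint ⟨(f : H) + (v : H), hfv⟩ + L v⟫).im := by
    intro f v hfv
    have hf : (f : H) ∈ S.adjoint.domain :=
      S.mem_adjoint_domain_of_exists (f : H) ⟨S f, fun x => (hSsymm f x).symm⟩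
    have hv : (v : H) ∈ S.adjoint.domain := h𝓥 v.2
    have hsplit : S.adjoint ⟨(f : H) + (v : H), hfv⟩
        = S.adjoint ⟨(f : H), hf⟩ + S.adjoint ⟨(v : H), hv⟩ := by
      rw [← S.adjoint.map_add]
      congr 1
    have hSf : S.adjoint ⟨(f : H), hf⟩ = S f :=
      LinearPMap.adjoint_apply_eq hSdense _ (fun x => (hSsymm f x).symm)
    -- abbreviations
    set ψ : H := (f : H) + (v : H) with hψ
    set w : H := S.adjoint ⟨(v : H), hv⟩ with hw
    -- imaginary part of ⟪f, S f⟫ is zero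
    have h1 : (⟪(f : H), S f⟫).im = 0 := by
      have hc : (starRingEnd ℂ) ⟪(f : H), S f⟫ = ⟪(f : H), S f⟫ := by
        rw [inner_conj_symm, hSsymm f f]
      have := congrArg Complex.im hc
      simp only [Complex.conj_im] at this
      linarith
    -- cross terms cancel
    have h2 : ⟪(v : H), S f⟫ = (starRingEnd ℂ) ⟪(f : H), w⟫ := by
      rw [inner_conj_symm]
      exact (LinearPMap.adjoint_isFormalAdjoint hSdense ⟨(v : H), hv⟩ f).symm
    have h3 : ε * ‖(v : H)‖ ^ 2 ≤ (⟪(v : H), w⟫).im := hlower v hv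
    -- Cauchy–Schwarz bound for the L term
    have h4 : -(‖ψ‖ * (M * ‖(v : H)‖)) ≤ (⟪ψ, L v⟫).im := by
      have habs : |(⟪ψ, L v⟫).im| ≤ ‖ψ‖ * (M * ‖(v : H)‖) := by
        calc |(⟪ψ, L v⟫).im| ≤ ‖⟪ψ, L v⟫‖ := Complex.abs_im_le_norm _
          _ ≤ ‖ψ‖ * ‖L v‖ := by
              exact norm_inner_le_norm _ _
          _ ≤ ‖ψ‖ * (M * ‖(v : H)‖) :=
              mul_le_mul_of_nonneg_left (hM v) (norm_nonneg _)
      linarith [abs_le.mp habs]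
    -- expand
    have hexp : (⟪ψ, S.adjoint ⟨ψ, hfv⟩ + L v⟫).im
        = (⟪(f : H), S f⟫).im + (⟪(f : H), w⟫).im + (⟪(v : H), S f⟫).im
          + (⟪(v : H), w⟫).im + (⟪ψ, L v⟫).im := by
      rw [hsplit, hSf, hψ]
      simp only [inner_add_right, inner_add_left, Complex.add_im]
      ring
    rw [hexp]
    have h2' : (⟪(v : H), S f⟫).im = -(⟪(f : H), w⟫).im := by
      rw [h2, Complex.conj_im]
    rw [h1, h2']
    have hn : 0 ≤ ‖ψ‖ := norm_nonneg _
    have hnv : 0 ≤ ‖(v : H)‖ := norm_nonneg _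
    have hkey : -(M ^ 2 / (4 * ε)) * ‖ψ‖ ^ 2
        ≤ ε * ‖(v : H)‖ ^ 2 - ‖ψ‖ * (M * ‖(v : H)‖) := by
      have hclear : M ^ 2 / (4 * ε) * ‖ψ‖ ^ 2 * (4 * ε) = M ^ 2 * ‖ψ‖ ^ 2 := by
        field_simp
      nlinarith [sq_nonneg (2 * ε * ‖(v : H)‖ - M * ‖ψ‖), hε, hclear]
    linarith
  refine ⟨key, ?_⟩
  intro V _hVsa hVlb f v hfv
  set ψ : H := (f : H) + (v : H) with hψ
  have h5 : (⟪ψ, Complex.I • V ψ⟫).im = (⟪ψ, V ψ⟫).re := by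
    rw [inner_smul_right]
    simp [Complex.mul_im]
  have hexp : (⟪ψ, S.adjoint ⟨ψ, hfv⟩ + L v + Complex.I • V ψ⟫).im
      = (⟪ψ, S.adjoint ⟨ψ, hfv⟩ + L v⟫).im + (⟪ψ, Complex.I • V ψ⟫).im := by
    rw [inner_add_right, Complex.add_im]
  rw [hexp, h5]
  have := key f v hfv
  have := hVlb ψ
  linarith
end
end
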